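/- Let R be a commutative ring, S a multiplicative subset of R, and T a ring extension of R which is S-finite as an R-module. If R is a uniformly S-Noetherian ring, then T is a uniformly S-Noetherian ring. -/

import Mathlib

/-- A submodule `N` is `s`-finite if there is a finitely generated submodule `F`
with `s N ⊆ F ⊆ N`. -/
def SFinSub {R M : Type*} [CommRing R] [AddCommGroup M] [Module R M]
    (s : R) (N : Submodule R M) : Prop :=
  ∃ F : Submodule R M, F.FG ∧ F ≤ N ∧ ∀ x ∈ N, s • x ∈ F

lemma SFinSub.map_equiv {R M M' : Type*} [CommRing R] [AddCommGroup M] [Module R M]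
    [AddCommGroup M'] [Module R M'] (e : M ≃ₗ[R] M') {s : R} {N : Submodule R M}
    (h : SFinSub s N) : SFinSub s (N.map (e : M →ₗ[R] M')) := by
  obtain ⟨F, hFG, hle, hs⟩ := h
  refine ⟨F.map (e : M →ₗ[R] M'), hFG.map _, Submodule.map_mono hle, ?_⟩
  rintro _ ⟨x, hx, rfl⟩
  exact ⟨s • x, hs x hx, map_smul _ _ _⟩

lemma sfin_prod {R M M' : Type*} [CommRing R] [AddCommGroup M] [Module R M]
    [AddCommGroup M'] [Module R M'] {s s' : R}
    (hM : ∀ N : Submodule R M, SFinSub s N)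
    (hM' : ∀ N : Submodule R M', SFinSub s' N)
    (N : Submodule R (M × M')) : SFinSub (s * s') N := by
  classical
  obtain ⟨F', hF'fg, hF'le, hF's⟩ := hM' (N.map (LinearMap.snd R M M'))
  obtain ⟨F₀, hF₀fg, hF₀le, hF₀s⟩ := hM (N.comap (LinearMap.inl R M M'))
  obtain ⟨G, hG⟩ := hF'fg
  -- lift each generator of F' to an element of N
  have hlift : ∀ g ∈ G, ∃ z : M × M', z ∈ N ∧ z.2 = g := by
    intro g hg
    have : g ∈ N.map (LinearMap.snd R M M') :=
      hF'le (hG ▸ Submodule.subset_span hg)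
    obtain ⟨z, hz, hz2⟩ := this
    exact ⟨z, hz, hz2⟩
  choose! lift hliftN hlift2 using hlift
  set L : Set (M × M') := lift '' ↑G with hL
  have hLle : Submodule.span R L ≤ N := by
    rw [Submodule.span_le]
    rintro _ ⟨g, hg, rfl⟩
    exact hliftN g hg
  refine ⟨Submodule.span R L ⊔ F₀.map (LinearMap.inl R M M'), ?_, ?_, ?_⟩
  · exact Submodule.FG.sup ⟨G.image lift, by simp [hL]⟩ (hF₀fg.map _)
  · refine sup_le hLle ?_
    rintro _ ⟨x, hx, rfl⟩
    exact hF₀le hx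
  · intro w hw
    have hw2 : w.2 ∈ N.map (LinearMap.snd R M M') := ⟨w, hw, rfl⟩
    have h1 : s' • w.2 ∈ F' := hF's _ hw2
    -- F' = span G = image under snd of span L
    have hGL : (G : Set M') = (LinearMap.snd R M M') '' L := by
      ext g
      constructor
      · intro hg; exact ⟨lift g, ⟨g, hg, rfl⟩, hlift2 g hg⟩
      · rintro ⟨_, ⟨g', hg', rfl⟩, rfl⟩
        simpa [LinearMap.snd_apply, hlift2 g' hg'] using hg'
    have h2 : s' • w.2 ∈ (Submodule.span R L).map (LinearMap.snd R M M') := by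
      rw [Submodule.map_span, ← hGL, hG]; exact h1
    obtain ⟨u, hu, hu2⟩ := h2
    set v : M × M' := s' • w - u with hv
    have hvN : v ∈ N := N.sub_mem (N.smul_mem s' hw) (hLle hu)
    have hu2' : u.2 = s' • w.2 := hu2
    have hv2 : v.2 = 0 := by
      show (s' • w - u).2 = 0
      simp [hu2']
    have hveq : v = LinearMap.inl R M M' v.1 := by
      ext
      · rfl
      · simpa using hv2
    have hv1 : v.1 ∈ N.comap (LinearMap.inl R M M') := by
      simpa [Submodule.mem_comap, ← hveq] using hvN
    have h3 : s • v.1 ∈ F₀ := hF₀s _ hv1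
    have key : (s * s') • w = s • u + LinearMap.inl R M M' (s • v.1) := by
      rw [map_smul, ← hveq, hv, mul_smul, smul_sub]
      abel
    rw [key]
    exact Submodule.add_mem _
      (Submodule.mem_sup_left (Submodule.smul_mem _ s hu))
      (Submodule.mem_sup_right ⟨s • v.1, h3, rfl⟩)

/-- the linear equivalence `(Fin (n+1) → R) ≃ₗ R × (Fin n → R)` -/
def piSuccLEquiv (R : Type*) [CommRing R] (n : ℕ) :
    (Fin (n + 1) → R) ≃ₗ[R] R × (Fin n → R) :=
  { (Fin.consEquiv (fun _ : Fin (n + 1) => R)).symm with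
    map_add' := fun _ _ => rfl
    map_smul' := fun _ _ => rfl }

lemma sfin_pi {R : Type*} [CommRing R] {s : R} (hR : ∀ I : Ideal R, SFinSub s I) :
    ∀ n, ∀ N : Submodule R (Fin n → R), SFinSub (s ^ n) N := by
  intro n
  induction n with
  | zero =>
    intro N
    refine ⟨⊥, Submodule.fg_bot, bot_le, fun x _ => ?_⟩
    simp [Subsingleton.elim ((1 : R) • x) 0]
  | succ n ih =>
    intro N
    have h := sfin_prod hR ih (N.map (piSuccLEquiv R n).toLinearMap)
    have h2 := h.map_equiv (piSuccLEquiv R n).symm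
    have h3 : (N.map (piSuccLEquiv R n).toLinearMap).map
        ((piSuccLEquiv R n).symm : (R × (Fin n → R)) →ₗ[R] (Fin (n + 1) → R)) = N := by
      rw [← Submodule.map_comp]
      convert Submodule.map_id N using 2
      ext x : 2
      simp
    rw [h3] at h2
    have : s ^ (n + 1) = s * s ^ n := by ring
    rwa [this]

theorem extension_uniformly_S_noetherian
    {R T : Type*} [CommRing R] [CommRing T] [Algebra R T]
    (hinj : Function.Injective (algebraMap R T))
    (S : Submonoid R)
    (hTfin : ∃ s ∈ S, SFinSub s (⊤ : Submodule R T))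
    (hR : ∃ s ∈ S, ∀ I : Ideal R, SFinSub s I) :
    ∃ s ∈ S, ∀ J : Ideal T, ∃ F : Ideal T, F.FG ∧ F ≤ J ∧
      ∀ x ∈ J, algebraMap R T s * x ∈ F := by
  classical
  obtain ⟨s₁, hs₁S, F₀, hF₀fg, -, hF₀⟩ := hTfin
  obtain ⟨s₂, hs₂S, hRs⟩ := hR
  obtain ⟨G, hG⟩ := hF₀fg
  set n := G.card with hn
  set g : Fin n → T := fun i => (G.equivFin.symm i : T) with hg
  have hrange : Set.range g = (G : Set T) := by
    ext t
    constructor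
    · rintro ⟨i, rfl⟩; exact (G.equivFin.symm i).2
    · intro ht; exact ⟨G.equivFin ⟨t, ht⟩, by simp [hg]⟩
  set φ : (Fin n → R) →ₗ[R] T := Fintype.linearCombination R g with hφ
  have hφrange : LinearMap.range φ = F₀ := by
    rw [hφ, Fintype.range_linearCombination, hrange, hG]
  refine ⟨s₂ ^ n * s₁, S.mul_mem (pow_mem hs₂S n) hs₁S, ?_⟩
  intro J
  set N : Submodule R (Fin n → R) := (J.restrictScalars R).comap φ with hN
  obtain ⟨F, hFfg, hFle, hFs⟩ := sfin_pi hRs n N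
  obtain ⟨H, hH⟩ := hFfg
  refine ⟨Ideal.span (φ '' ↑H), Submodule.fg_span (Set.Finite.image _ H.finite_toSet), ?_, ?_⟩
  · rw [Ideal.span_le]
    rintro _ ⟨v, hv, rfl⟩
    have : v ∈ N := hFle (hH ▸ Submodule.subset_span hv)
    exact this
  · intro x hx
    have hsx : s₁ • x ∈ F₀ := hF₀ x trivial
    rw [← hφrange] at hsx
    obtain ⟨v, hv⟩ := hsx
    have hvN : v ∈ N := by
      rw [hN, Submodule.mem_comap, hv]
      have : s₁ • x = algebraMap R T s₁ * x := Algebra.smul_def _ _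
      simpa [Submodule.restrictScalars_mem, this] using Ideal.mul_mem_left J _ hx
    have h1 : s₂ ^ n • v ∈ F := hFs v hvN
    have h2 : φ (s₂ ^ n • v) ∈ Submodule.span R (φ '' ↑H) := by
      rw [← Submodule.map_span, hH]
      exact ⟨_, h1, rfl⟩
    have h3 : Submodule.span R (φ '' ↑H) ≤
        (Ideal.span (φ '' ↑H)).restrictScalars R :=
      Submodule.span_le_restrictScalars R T _
    have h4 : φ (s₂ ^ n • v) = algebraMap R T (s₂ ^ n * s₁) * x := by
      rw [map_smul, hv, ← mul_smul, Algebra.smul_def]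
    rw [← h4]
    exact h3 h2
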